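/- With F_{1,i} as in the recursion F_{1,1} = P^+ D^{-1} L_k, F_{1,i+1} = P^+ D^{-1} P^- D^{-1} F_{1,i}, the function \bar F_{1,i} := P^- D^{-1} F_{1,i} admits a representation \bar F_{1,i} = Σ_{m=k-2i+1}^{k} β_{i,m} (L_m - L_{m-1}) for constants β_{i,m}; in particular \bar F_{1,i}(1) = 0. -/

import Mathlib

open Polynomial Finset

/-- Legendre polynomial of degree `m` on `[-1,1]`, normalized so `L_m(1) = 1`. -/
noncomputable def leg (m : ℕ) : Polynomial ℝ :=
  Polynomial.C (((2 : ℝ) ^ m * Nat.factorial m)⁻¹) *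
    (fun p => Polynomial.derivative p)^[m] ((Polynomial.X ^ 2 - 1) ^ m)

/-- The antiderivative operator `D⁻¹ v (s) = ∫_{-1}^s v`. -/
noncomputable def Dinv (v : ℝ → ℝ) (s : ℝ) : ℝ := ∫ t in (-1 : ℝ)..s, v t

/-- Degree-`k` right Gauss–Radau projection on `[-1,1]`. -/
def IsRadauNeg (k : ℕ) (v : ℝ → ℝ) (p : Polynomial ℝ) : Prop :=
  p.natDegree ≤ k ∧
  (∀ w : Polynomial ℝ, w.natDegree + 1 ≤ k →
    ∫ s in (-1 : ℝ)..1, (v s - p.eval s) * w.eval s = 0) ∧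
  p.eval 1 = v 1

/-- Degree-`k` left Gauss–Radau projection on `[-1,1]`. -/
def IsRadauPos (k : ℕ) (v : ℝ → ℝ) (p : Polynomial ℝ) : Prop :=
  p.natDegree ≤ k ∧
  (∀ w : Polynomial ℝ, w.natDegree + 1 ≤ k →
    ∫ s in (-1 : ℝ)..1, (v s - p.eval s) * w.eval s = 0) ∧
  p.eval (-1) = v (-1)


noncomputable def antider (p : Polynomial ℝ) : Polynomial ℝ :=
  ∑ n ∈ range (p.natDegree + 1), Polynomial.C (p.coeff n / (n + 1)) * Polynomial.X ^ (n + 1)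

lemma derivative_antider (p : Polynomial ℝ) : derivative (antider p) = p := by
  unfold antider
  rw [map_sum]
  conv_rhs => rw [p.as_sum_range' (p.natDegree + 1) (Nat.lt_succ_self _)]
  refine Finset.sum_congr rfl fun n _ => ?_
  rw [derivative_C_mul, derivative_X_pow, Nat.add_sub_cancel, ← C_mul_X_pow_eq_monomial,
    ← mul_assoc, ← C_mul]
  congr 2
  push_cast
  field_simp

lemma natDegree_antider (p : Polynomial ℝ) : (antider p).natDegree ≤ p.natDegree + 1 := by
  refine natDegree_sum_le_of_forall_le _ _ fun n hn => ?_
  refine (natDegree_C_mul_le _ _).trans ?_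
  simpa using Nat.lt_succ_iff.mp (Finset.mem_range.mp hn)

noncomputable def PInt (p : Polynomial ℝ) : Polynomial ℝ :=
  antider p - Polynomial.C ((antider p).eval (-1))

lemma derivative_PInt (p : Polynomial ℝ) : derivative (PInt p) = p := by
  simp [PInt, derivative_antider]

lemma PInt_eval_neg_one (p : Polynomial ℝ) : (PInt p).eval (-1) = 0 := by simp [PInt]

lemma natDegree_PInt (p : Polynomial ℝ) : (PInt p).natDegree ≤ p.natDegree + 1 :=
  (natDegree_sub_le _ _).trans (by simp [natDegree_antider p])

lemma Dinv_poly (p : Polynomial ℝ) (s : ℝ) :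
    Dinv (fun t => p.eval t) s = (PInt p).eval s := by
  have h : ∀ x ∈ Set.uIcc (-1 : ℝ) s, HasDerivAt (fun t => (PInt p).eval t) (p.eval x) x := by
    intro x _
    have := (PInt p).hasDerivAt x
    rwa [derivative_PInt] at this
  have := intervalIntegral.integral_eq_sub_of_hasDerivAt h
    (p.continuous.intervalIntegrable _ _)
  rw [Dinv, this, PInt_eval_neg_one, sub_zero]

lemma polyIntegrable (p : Polynomial ℝ) (a b : ℝ) :
    IntervalIntegrable (fun s => p.eval s) MeasureTheory.volume a b :=
  p.continuous.intervalIntegrable _ _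

/-- Integration by parts for polynomials on [-1,1]. -/
lemma poly_ibp (P Q : Polynomial ℝ) :
    ∫ s in (-1:ℝ)..1, (derivative P).eval s * Q.eval s
      = P.eval 1 * Q.eval 1 - P.eval (-1) * Q.eval (-1)
        - ∫ s in (-1:ℝ)..1, P.eval s * (derivative Q).eval s := by
  have h := intervalIntegral.integral_deriv_mul_eq_sub
    (a := (-1:ℝ)) (b := (1:ℝ)) (u := fun s => P.eval s) (v := fun s => Q.eval s)
    (u' := fun s => (derivative P).eval s) (v' := fun s => (derivative Q).eval s)
    (fun x _ => P.hasDerivAt x) (fun x _ => Q.hasDerivAt x)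
    (polyIntegrable _ _ _) (polyIntegrable _ _ _)
  rw [intervalIntegral.integral_add
      (((derivative P).continuous.fun_mul Q.continuous).intervalIntegrable _ _)
      ((P.continuous.fun_mul (derivative Q).continuous).intervalIntegrable _ _)] at h
  linarith

lemma iterate_derivative_factor (a : ℝ) (m : ℕ) :
    ∀ j, j ≤ m → ∀ g : Polynomial ℝ, ∃ h : Polynomial ℝ,
      derivative^[j] ((X - C a) ^ m * g) = (X - C a) ^ (m - j) * h := by
  intro j
  induction j with
  | zero => exact fun _ g => ⟨g, by simp⟩
  | succ j ih =>
    intro hj g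
    obtain ⟨h, hh⟩ := ih (Nat.le_of_succ_le hj) g
    refine ⟨C ((m - j : ℕ) : ℝ) * h + (X - C a) * derivative h, ?_⟩
    have hmj : m - j = (m - (j + 1)) + 1 := by omega
    rw [Function.iterate_succ_apply', hh, derivative_mul, derivative_pow, hmj]
    simp only [derivative_sub, derivative_X, derivative_C, sub_zero, mul_one,
      Nat.add_sub_cancel, C_eq_natCast]
    ring

lemma eval_one_iterate (m : ℕ) : ∀ g : Polynomial ℝ,
    (derivative^[m] ((X - C 1) ^ m * g)).eval 1 = (Nat.factorial m : ℝ) * g.eval 1 := by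
  induction m with
  | zero => intro g; simp
  | succ m ih =>
    intro g
    have key : derivative ((X - C 1) ^ (m + 1) * g)
        = (X - C 1) ^ m * (C ((m + 1 : ℕ) : ℝ) * g + (X - C 1) * derivative g) := by
      rw [derivative_mul, derivative_pow]
      simp only [derivative_sub, derivative_X, derivative_C, sub_zero, mul_one,
        Nat.add_sub_cancel, C_eq_natCast]
      ring
    rw [Function.iterate_succ_apply, key, ih]
    simp [Nat.factorial_succ]
    ring

lemma sq_sub_one_factor (m : ℕ) :
    ((X : Polynomial ℝ) ^ 2 - 1) ^ m = (X - C 1) ^ m * (X - C (-1)) ^ m := by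
  rw [← mul_pow]; congr 1; simp [C_1]; ring

/-- boundary vanishing of lower derivatives -/
lemma iterate_eval_one_eq_zero (m j : ℕ) (hj : j < m) :
    (derivative^[j] (((X : Polynomial ℝ) ^ 2 - 1) ^ m)).eval 1 = 0 := by
  obtain ⟨h, hh⟩ := iterate_derivative_factor 1 m j (le_of_lt hj) ((X - C (-1)) ^ m)
  rw [sq_sub_one_factor, hh]
  have : m - j ≠ 0 := by omega
  simp [this, zero_pow this]

lemma iterate_eval_neg_one_eq_zero (m j : ℕ) (hj : j < m) :
    (derivative^[j] (((X : Polynomial ℝ) ^ 2 - 1) ^ m)).eval (-1) = 0 := by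
  obtain ⟨h, hh⟩ := iterate_derivative_factor (-1) m j (le_of_lt hj) ((X - C 1) ^ m)
  have fac : ((X : Polynomial ℝ) ^ 2 - 1) ^ m = (X - C (-1)) ^ m * (X - C 1) ^ m := by
    rw [← mul_pow]; congr 1; simp [C_1]; ring
  rw [fac, hh]
  have : m - j ≠ 0 := by omega
  simp [this, zero_pow this]

lemma leg_eval_one (m : ℕ) : (leg m).eval 1 = 1 := by
  have h := eval_one_iterate m ((X - C (-1)) ^ m)
  rw [leg, eval_mul, eval_C, sq_sub_one_factor, h]
  have h2 : ((X : Polynomial ℝ) - C (-1)).eval 1 = 2 := by simp; norm_num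
  rw [eval_pow, h2]
  have : (2 : ℝ) ^ m ≠ 0 := by positivity
  have : (Nat.factorial m : ℝ) ≠ 0 := Nat.cast_ne_zero.mpr (Nat.factorial_ne_zero m)
  field_simp

-- continues b.lean content; test separately by concatenation
lemma leg_orth (m : ℕ) (w : Polynomial ℝ) (hw : w.natDegree + 1 ≤ m) :
    ∫ s in (-1:ℝ)..1, (leg m).eval s * w.eval s = 0 := by
  set u : Polynomial ℝ := ((X : Polynomial ℝ) ^ 2 - 1) ^ m with hu
  have claim : ∀ j, j ≤ m →
      ∫ s in (-1:ℝ)..1, (derivative^[m] u).eval s * w.eval s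
        = (-1 : ℝ) ^ j * ∫ s in (-1:ℝ)..1,
            (derivative^[m - j] u).eval s * (derivative^[j] w).eval s := by
    intro j
    induction j with
    | zero => intro _; simp
    | succ j ih =>
      intro hj
      rw [ih (Nat.le_of_succ_le hj)]
      have hstep : derivative^[m - j] u = derivative (derivative^[m - (j+1)] u) := by
        have hmj : m - j = (m - (j + 1)) + 1 := by omega
        rw [hmj, Function.iterate_succ_apply']
      have hibp := poly_ibp (derivative^[m - (j+1)] u) (derivative^[j] w)
      rw [← hstep] at hibp
      rw [hibp, iterate_eval_one_eq_zero m _ (by omega), iterate_eval_neg_one_eq_zero m _ (by omega)]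
      rw [← Function.iterate_succ_apply' derivative j w]
      ring
  have hzero : derivative^[m] w = 0 :=
    iterate_derivative_eq_zero (by omega)
  have h := claim m le_rfl
  rw [Nat.sub_self, Function.iterate_zero_apply, hzero] at h
  simp only [eval_zero, mul_zero, intervalIntegral.integral_zero] at h
  rw [leg]
  simp only [eval_mul, eval_C, mul_assoc]
  rw [intervalIntegral.integral_const_mul, ← hu, h, mul_zero]

lemma u_monic (m : ℕ) : (((X : Polynomial ℝ) ^ 2 - 1) ^ m).Monic := by
  have : ((X : Polynomial ℝ) ^ 2 - 1) = X ^ 2 - C 1 := by simp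
  rw [this]
  exact (monic_X_pow_sub_C (1:ℝ) two_ne_zero).pow m

lemma u_natDegree (m : ℕ) : (((X : Polynomial ℝ) ^ 2 - 1) ^ m).natDegree = 2 * m := by
  have : ((X : Polynomial ℝ) ^ 2 - 1) = X ^ 2 - C 1 := by simp
  rw [this, (monic_X_pow_sub_C (1:ℝ) two_ne_zero).natDegree_pow, natDegree_X_pow_sub_C]
  ring

lemma leg_coeff_ne_zero (m : ℕ) : (leg m).coeff m ≠ 0 := by
  rw [leg, coeff_C_mul, Polynomial.coeff_iterate_derivative]
  have h2m : (((X : Polynomial ℝ) ^ 2 - 1) ^ m).coeff (m + m) = 1 := by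
    have := (u_monic m).coeff_natDegree
    rwa [u_natDegree, two_mul] at this
  rw [h2m, nsmul_eq_mul, mul_one]
  have h1 : ((2:ℝ) ^ m * Nat.factorial m)⁻¹ ≠ 0 := by
    apply inv_ne_zero
    exact mul_ne_zero (by positivity) (Nat.cast_ne_zero.mpr (Nat.factorial_ne_zero m))
  have h2 : (((m + m).descFactorial m : ℕ) : ℝ) ≠ 0 := by
    rw [Nat.cast_ne_zero]
    intro h
    exact absurd (Nat.descFactorial_eq_zero_iff_lt.mp h) (by omega)
  exact mul_ne_zero h1 h2

lemma leg_natDegree_le (m : ℕ) : (leg m).natDegree ≤ m := by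
  refine (natDegree_C_mul_le _ _).trans ?_
  refine (natDegree_iterate_derivative _ _).trans ?_
  rw [u_natDegree]; omega

lemma leg_zero : leg 0 = 1 := by
  simp [leg]

lemma leg_span : ∀ (k : ℕ) (p : Polynomial ℝ), p.natDegree ≤ k →
    ∃ c : ℕ → ℝ, p = ∑ m ∈ range (k + 1), c m • leg m := by
  intro k
  induction k with
  | zero =>
    intro p hp
    refine ⟨fun _ => p.coeff 0, ?_⟩
    conv_lhs => rw [eq_C_of_natDegree_le_zero hp]
    rw [Finset.sum_range_one, leg_zero, smul_eq_C_mul, mul_one]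
  | succ k ih =>
    intro p hp
    set a : ℝ := p.coeff (k + 1) / (leg (k + 1)).coeff (k + 1) with ha
    set q : Polynomial ℝ := p - a • leg (k + 1) with hq
    have hqdeg : q.natDegree ≤ k := by
      rw [natDegree_le_iff_coeff_eq_zero]
      intro N hN
      rcases eq_or_lt_of_le (Nat.succ_le_of_lt hN) with hNe | hNlt
      · rw [hq, coeff_sub, coeff_smul, ← hNe, ha, smul_eq_mul,
          div_mul_cancel₀ _ (leg_coeff_ne_zero (k + 1)), sub_self]
      · rw [hq, coeff_sub, coeff_smul,
          coeff_eq_zero_of_natDegree_lt (lt_of_le_of_lt hp hNlt),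
          coeff_eq_zero_of_natDegree_lt (lt_of_le_of_lt (leg_natDegree_le (k + 1)) hNlt)]
        simp
    obtain ⟨c, hc⟩ := ih q hqdeg
    refine ⟨fun m => if m = k + 1 then a else c m, ?_⟩
    rw [Finset.sum_range_succ]
    simp only [if_pos rfl]
    have heq : ∑ m ∈ range (k + 1), (if m = k + 1 then a else c m) • leg m
        = ∑ m ∈ range (k + 1), c m • leg m := by
      refine Finset.sum_congr rfl fun m hm => ?_
      rw [if_neg (Finset.mem_range.mp hm).ne]
    rw [heq, ← hc, hq, if_pos trivial]
    abel

lemma leg_sq_integral_ne_zero (j : ℕ) :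
    ∫ s in (-1:ℝ)..1, (leg j).eval s * (leg j).eval s ≠ 0 := by
  have hc : Continuous fun s => (leg j).eval s * (leg j).eval s :=
    ((leg j).continuous).mul ((leg j).continuous)
  have hpos : 0 < ∫ s in (-1:ℝ)..1, (leg j).eval s * (leg j).eval s := by
    rw [intervalIntegral.integral_pos_iff_support_of_nonneg_ae
      (Filter.Eventually.of_forall fun x => mul_self_nonneg _)
      (hc.intervalIntegrable _ _)]
    refine ⟨by norm_num, ?_⟩
    set f := fun s => (leg j).eval s * (leg j).eval s with hf
    have h1 : f 1 = 1 := by simp [hf, leg_eval_one]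
    have hmem : (1:ℝ) ∈ Function.support f := by
      rw [Function.mem_support, h1]; norm_num
    have hopen : IsOpen (Function.support f) := by
      rw [Function.support_eq_preimage]
      exact isOpen_ne.preimage hc
    obtain ⟨ε, hε, hball⟩ := Metric.isOpen_iff.mp hopen 1 hmem
    set ε' := min ε 1 with hε'
    have hε'pos : 0 < ε' := lt_min hε one_pos
    have hsub : Set.Ioo (1 - ε') 1 ⊆ Function.support f ∩ Set.Ioc (-1) 1 := by
      intro x hx
      have hx1 := hx.1
      have hx2 := hx.2
      have hεle : ε' ≤ ε := min_le_left _ _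
      have hεle1 : ε' ≤ 1 := min_le_right _ _
      refine ⟨hball ?_, ?_, le_of_lt hx2⟩
      · rw [Metric.mem_ball, Real.dist_eq, abs_lt]
        constructor <;> nlinarith
      · nlinarith
    calc (0 : ENNReal) < MeasureTheory.volume (Set.Ioo (1 - ε') 1) := by
          rw [Real.volume_Ioo]
          rw [ENNReal.ofReal_pos]
          nlinarith
      _ ≤ _ := MeasureTheory.measure_mono hsub
  exact ne_of_gt hpos

lemma transfer (k e : ℕ) (p q : Polynomial ℝ)
    (hp : ∀ w : Polynomial ℝ, w.natDegree + 1 ≤ e → ∫ s in (-1:ℝ)..1, p.eval s * w.eval s = 0)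
    (hq : ∀ w : Polynomial ℝ, w.natDegree + 1 ≤ k →
      ∫ s in (-1:ℝ)..1, (Dinv (fun t => p.eval t) s - q.eval s) * w.eval s = 0)
    (he : 1 ≤ e) :
    Dinv (fun t => p.eval t) 1 = 0 ∧
    ∀ w : Polynomial ℝ, w.natDegree + 2 ≤ e → w.natDegree + 1 ≤ k →
      ∫ s in (-1:ℝ)..1, q.eval s * w.eval s = 0 := by
  have hv1 : Dinv (fun t => p.eval t) 1 = 0 := by
    have h1 := hp 1 (by simpa using he)
    simp only [eval_one, mul_one] at h1
    rw [Dinv]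
    exact h1
  refine ⟨hv1, fun w hw2 hwk => ?_⟩
  have hsplit := hq w hwk
  simp only [Dinv_poly, sub_mul] at hsplit
  rw [intervalIntegral.integral_sub
      (((PInt p).continuous.fun_mul w.continuous).intervalIntegrable _ _)
      ((q.continuous.fun_mul w.continuous).intervalIntegrable _ _), sub_eq_zero] at hsplit
  rw [← hsplit]
  -- show ∫ PInt p * w = 0 by IBP
  have hibp := poly_ibp (PInt p) (PInt w)
  rw [derivative_PInt, derivative_PInt, PInt_eval_neg_one, PInt_eval_neg_one] at hibp
  have hP1 : (PInt p).eval 1 = 0 := by rw [← Dinv_poly]; exact hv1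
  have hpW : ∫ s in (-1:ℝ)..1, p.eval s * (PInt w).eval s = 0 := by
    refine hp (PInt w) ?_
    have := natDegree_PInt w
    omega
  rw [hpW, hP1] at hibp
  -- hibp : ... = 0 * _ - 0 * 0 - ... rearrangement
  have : ∫ s in (-1:ℝ)..1, (PInt p).eval s * w.eval s = 0 := by linarith [hibp]
  exact this

lemma abel_sum (a : ℕ) (ha : 1 ≤ a) : ∀ (k : ℕ) (c : ℕ → ℝ),
    (∑ m ∈ Finset.Icc (a - 1) k, c m) = 0 →
    ∃ β : ℕ → ℝ, ∑ m ∈ Finset.Icc (a - 1) k, c m • leg m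
      = ∑ m ∈ Finset.Icc a k, β m • (leg m - leg (m - 1)) := by
  intro k
  induction k using Nat.strong_induction_on with
  | _ k ih =>
    intro c hsum
    rcases lt_trichotomy k (a - 1) with hlt | heq | hgt
    · refine ⟨0, ?_⟩
      rw [Finset.Icc_eq_empty (by omega), Finset.Icc_eq_empty (by omega)]
      simp
    · refine ⟨0, ?_⟩
      rw [← heq] at hsum ⊢
      rw [Finset.Icc_self, Finset.sum_singleton] at hsum ⊢
      rw [Finset.Icc_eq_empty (by omega)]
      simp [hsum]
    · obtain ⟨j, rfl⟩ : ∃ j, k = j + 1 := ⟨k - 1, by omega⟩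
      have hak : a ≤ j + 1 := by omega
      have haj : a - 1 ≤ j := by omega
      set S := Finset.Icc (a - 1) j with hS
      have hjS : j ∈ S := Finset.mem_Icc.mpr ⟨haj, le_rfl⟩
      set c' : ℕ → ℝ := fun m => if m = j then c j + c (j + 1) else c m with hc'
      have hereS : ∀ m ∈ S.erase j, c' m = c m := fun m hm => if_neg (Finset.ne_of_mem_erase hm)
      have hsplit1 : ∑ m ∈ S, c' m = (∑ m ∈ S, c m) + c (j + 1) := by
        rw [← Finset.sum_erase_add _ c' hjS, ← Finset.sum_erase_add _ c hjS,
          Finset.sum_congr rfl hereS]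
        have : c' j = c j + c (j + 1) := by rw [hc']; simp
        rw [this]; ring
      have hsplit2 : ∑ m ∈ S, c' m • leg m = (∑ m ∈ S, c m • leg m) + c (j + 1) • leg j := by
        rw [← Finset.sum_erase_add _ (fun m => c' m • leg m) hjS,
          ← Finset.sum_erase_add _ (fun m => c m • leg m) hjS,
          Finset.sum_congr rfl (fun m hm => by rw [hereS m hm])]
        have : c' j = c j + c (j + 1) := by rw [hc']; simp
        rw [this, add_smul]; abel
      rw [Finset.sum_Icc_succ_top (by omega : a - 1 ≤ j + 1)] at hsum
      have hsum' : ∑ m ∈ S, c' m = 0 := by rw [hsplit1]; linarith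
      obtain ⟨β', hβ'⟩ := ih j (by omega) c' hsum'
      refine ⟨Function.update β' (j + 1) (c (j + 1)), ?_⟩
      rw [Finset.sum_Icc_succ_top (by omega : a - 1 ≤ j + 1), Finset.sum_Icc_succ_top hak]
      have hupd2 : ∀ m ∈ Finset.Icc a j,
          (Function.update β' (j + 1) (c (j + 1))) m • (leg m - leg (m - 1))
            = β' m • (leg m - leg (m - 1)) := by
        intro m hm
        have := (Finset.mem_Icc.mp hm).2
        rw [Function.update_of_ne (by omega)]
      rw [Finset.sum_congr rfl hupd2, Function.update_self, ← hβ', hsplit2,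
        Nat.add_sub_cancel, smul_sub]
      abel

lemma represent (k a : ℕ) (ha1 : 1 ≤ a) (hak : a ≤ k + 1) (p : Polynomial ℝ)
    (hdeg : p.natDegree ≤ k) (h1 : p.eval 1 = 0)
    (horth : ∀ j : ℕ, j + 2 ≤ a → ∫ s in (-1:ℝ)..1, p.eval s * (leg j).eval s = 0) :
    ∃ β : ℕ → ℝ, p = ∑ m ∈ Finset.Icc a k, β m • (leg m - leg (m - 1)) := by
  obtain ⟨c, hc⟩ := leg_span k p hdeg
  have hcj : ∀ j, j + 2 ≤ a → c j = 0 := by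
    intro j hj
    have hjk : j ∈ range (k + 1) := Finset.mem_range.mpr (by omega)
    have horthj := horth j hj
    rw [hc] at horthj
    simp only [eval_finset_sum, eval_smul, smul_eq_mul, Finset.sum_mul, mul_assoc] at horthj
    rw [intervalIntegral.integral_finset_sum
      (fun m _ => ((continuous_const.fun_mul (((leg m).continuous).fun_mul ((leg j).continuous))).intervalIntegrable _ _))] at horthj
    simp only [intervalIntegral.integral_const_mul] at horthj
    rw [Finset.sum_eq_single j] at horthj
    · exact (mul_eq_zero.mp horthj).resolve_right (leg_sq_integral_ne_zero j)
    · intro m hm hmj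
      rcases lt_or_gt_of_ne hmj with hlt | hgt
      · have : ∫ s in (-1:ℝ)..1, (leg m).eval s * (leg j).eval s = 0 := by
          rw [intervalIntegral.integral_congr (g := fun s => (leg j).eval s * (leg m).eval s)
            (fun s _ => mul_comm _ _)]
          exact leg_orth j (leg m) (by have := leg_natDegree_le m; omega)
        rw [this, mul_zero]
      · have : ∫ s in (-1:ℝ)..1, (leg m).eval s * (leg j).eval s = 0 :=
          leg_orth m (leg j) (by have := leg_natDegree_le j; omega)
        rw [this, mul_zero]
    · intro hnot
      exact absurd hjk hnot
  -- restrict the sum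
  have hsum_split : p = ∑ m ∈ Finset.Icc (a - 1) k, c m • leg m := by
    rw [hc, Finset.range_eq_Ico, ← Finset.sum_Ico_consecutive _ (by omega : 0 ≤ a - 1)
      (by omega : a - 1 ≤ k + 1)]
    have hzero : ∑ m ∈ Finset.Ico 0 (a - 1), c m • leg m = 0 := by
      refine Finset.sum_eq_zero fun m hm => ?_
      have := (Finset.mem_Ico.mp hm).2
      rw [hcj m (by omega), zero_smul]
    rw [hzero, zero_add, Finset.Ico_add_one_right_eq_Icc]
  have heval : (∑ m ∈ Finset.Icc (a - 1) k, c m) = 0 := by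
    have := h1
    rw [hsum_split] at this
    simpa [eval_finset_sum, leg_eval_one] using this
  obtain ⟨β, hβ⟩ := abel_sum a ha1 k c heval
  exact ⟨β, by rw [hsum_split, hβ]⟩

/-- Structure of `F̄_{1,i} := P⁻ D⁻¹ F_{1,i}` (here `G i`), where `F_{1,1} = P⁺D⁻¹L_k` and `F_{1,i+1} = P⁺D⁻¹P⁻D⁻¹F_{1,i}`. -/
theorem barF1i_representation (k : ℕ) (hk : 2 ≤ k) (F G : ℕ → Polynomial ℝ)
    (hF1 : IsRadauPos k (Dinv fun t => (leg k).eval t) (F 1))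
    (hG : ∀ i, IsRadauNeg k (Dinv fun t => (F i).eval t) (G i))
    (hFsucc : ∀ i, IsRadauPos k (Dinv fun t => (G i).eval t) (F (i + 1))) :
    ∀ i, 1 ≤ i → i ≤ k / 2 →
      (∃ β : ℕ → ℝ, G i = ∑ m ∈ Finset.Icc (k + 1 - 2 * i) k, β m • (leg m - leg (m - 1))) ∧
      (G i).eval 1 = 0 := by
  have hA : ∀ i, 1 ≤ i → i ≤ k / 2 →
      ∀ w : Polynomial ℝ, w.natDegree + 1 ≤ k - 2 * i + 1 →
        ∫ s in (-1:ℝ)..1, (F i).eval s * w.eval s = 0 := by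
    intro i
    induction i with
    | zero => omega
    | succ i ih =>
      intro _ h2
      rcases Nat.eq_zero_or_pos i with rfl | hi1
      · -- base case : F 1
        have htr := transfer k k (leg k) (F 1)
          (fun w hw => leg_orth k w hw) hF1.2.1 (by omega)
        intro w hw
        exact htr.2 w (by omega) (by omega)
      · have hAi := ih hi1 (by omega)
        have htr1 := transfer k (k - 2 * i + 1) (F i) (G i) hAi (hG i).2.1 (by omega)
        have hBi : ∀ w : Polynomial ℝ, w.natDegree + 1 ≤ k - 2 * i →
            ∫ s in (-1:ℝ)..1, (G i).eval s * w.eval s = 0 := by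
          intro w hw
          exact htr1.2 w (by omega) (by omega)
        have htr2 := transfer k (k - 2 * i) (G i) (F (i + 1)) hBi (hFsucc i).2.1 (by omega)
        intro w hw
        exact htr2.2 w (by omega) (by omega)
  intro i hi1 hi2
  have hAi := hA i hi1 hi2
  have htr := transfer k (k - 2 * i + 1) (F i) (G i) hAi (hG i).2.1 (by omega)
  have hG1 : (G i).eval 1 = 0 := by rw [(hG i).2.2]; exact htr.1
  refine ⟨?_, hG1⟩
  refine represent k (k + 1 - 2 * i) (by omega) (by omega) (G i) (hG i).1 hG1 ?_
  intro j hj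
  refine htr.2 (leg j) ?_ ?_ <;> [skip; skip] <;>
    · have := leg_natDegree_le j
      omega
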